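/- Let P be a polynomial over ℂ with natural degree 2α that is palindromic, i.e. P.coeff i = P.coeff (2α − i) for every i ≤ 2α. Then, in the multiset of roots of P counted with multiplicity, the number of roots z with |z| < 1 equals the number of roots z with |z| > 1; consequently 2·(number of roots with |z| < 1) + (number of roots with |z| = 1) = 2α. -/

import Mathlib

open Polynomial

private lemma reverse_pow_aux (f : Polynomial ℂ) (m : ℕ) :
    (f ^ m).reverse = f.reverse ^ m := by
  induction m with
  | zero => simp [Polynomial.reverse]
  | succ n ih => rw [pow_succ, Polynomial.reverse_mul_of_domain, ih, pow_succ]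

private lemma reverse_X_sub_C (z : ℂ) :
    (X - C z).reverse = 1 - C z * X := by
  unfold Polynomial.reverse
  rw [natDegree_X_sub_C, Polynomial.reflect_sub, Polynomial.reflect_C]
  have : (X : Polynomial ℂ) = X ^ 1 := (pow_one _).symm
  rw [this, Polynomial.reflect_monomial]
  simp [Polynomial.revAt_le]

private lemma rootMult_le_aux (P : Polynomial ℂ) (hP : P ≠ 0) (hrev : P.reverse = P)
    (z : ℂ) (hz : z ≠ 0) :
    P.rootMultiplicity z ≤ P.rootMultiplicity z⁻¹ := by
  set m := P.rootMultiplicity z with hm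
  obtain ⟨Q, hQ⟩ := Polynomial.pow_rootMultiplicity_dvd P z
  rw [Polynomial.le_rootMultiplicity_iff hP]
  have key : P = ((-C z) ^ m * (X - C z⁻¹) ^ m) * Q.reverse := by
    conv_lhs => rw [← hrev, hQ, Polynomial.reverse_mul_of_domain, reverse_pow_aux,
      reverse_X_sub_C]
    have h1 : (1 : Polynomial ℂ) - C z * X = (-C z) * (X - C z⁻¹) := by
      rw [mul_sub, neg_mul, neg_mul, sub_neg_eq_add, ← C_mul, mul_inv_cancel₀ hz, C_1]
      ring
    rw [h1, mul_pow]
  rw [key]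
  exact Dvd.dvd.mul_right (dvd_mul_left _ _) _

private lemma rootMult_eq_aux (P : Polynomial ℂ) (hP : P ≠ 0) (hrev : P.reverse = P)
    (z : ℂ) (hz : z ≠ 0) :
    P.rootMultiplicity z⁻¹ = P.rootMultiplicity z := by
  refine le_antisymm ?_ (rootMult_le_aux P hP hrev z hz)
  have := rootMult_le_aux P hP hrev z⁻¹ (inv_ne_zero hz)
  rwa [inv_inv] at this

/-- The roots (with multiplicity) of a palindromic polynomial of degree `2α` over `ℂ`
split evenly between the inside and the outside of the unit circle. -/
theorem palindromic_roots_split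
    (α : ℕ) (P : Polynomial ℂ)
    (hdeg : P.natDegree = 2 * α)
    (hpal : ∀ i ≤ 2 * α, P.coeff i = P.coeff (2 * α - i)) :
    (P.roots.filter (fun z => ‖z‖ < 1)).card
      = (P.roots.filter (fun z => 1 < ‖z‖)).card ∧
    2 * (P.roots.filter (fun z => ‖z‖ < 1)).card
      + (P.roots.filter (fun z => ‖z‖ = 1)).card = 2 * α := by
  by_cases hP : P = 0
  · subst hP
    simp at hdeg
    simp [Polynomial.roots_zero, ← hdeg]
  -- P.reverse = P
  have hrev : P.reverse = P := by
    unfold Polynomial.reverse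
    rw [hdeg]
    ext i
    rw [Polynomial.coeff_reflect]
    rcases le_or_gt i (2 * α) with h | h
    · rw [Polynomial.revAt_le h, (hpal i h).symm]
    · rw [Polynomial.revAt_eq_self_of_lt h]
  -- constant coefficient is nonzero, so 0 is not a root
  have hc0 : P.coeff 0 ≠ 0 := by
    rw [hpal 0 (Nat.zero_le _), Nat.sub_zero, ← hdeg]
    exact Polynomial.leadingCoeff_ne_zero.mpr hP
  have h0 : (0 : ℂ) ∉ P.roots := by
    intro h
    have := Polynomial.isRoot_of_mem_roots h
    rw [Polynomial.IsRoot, ← Polynomial.coeff_zero_eq_eval_zero] at this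
    exact hc0 this
  -- roots are closed under inversion, with multiplicity
  have hmap : P.roots.map (·⁻¹) = P.roots := by
    ext z
    have hcnt := Multiset.count_map_eq_count' (·⁻¹) P.roots inv_injective z⁻¹
    rw [inv_inv] at hcnt
    rw [hcnt, Polynomial.count_roots, Polynomial.count_roots]
    by_cases hz : z = 0
    · subst hz
      rw [inv_zero]
    · exact rootMult_eq_aux P hP hrev z hz
  -- first claim
  have h1 : (P.roots.filter (fun z => ‖z‖ < 1)).card
      = (P.roots.filter (fun z => 1 < ‖z‖)).card := by
    conv_rhs => rw [← hmap]
    rw [Multiset.filter_map, Multiset.card_map]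
    apply congrArg
    apply Multiset.filter_congr
    intro z hzmem
    have hz : z ≠ 0 := fun h => h0 (h ▸ hzmem)
    have habs : ‖z‖ ≠ 0 := norm_ne_zero_iff.mpr hz
    simp only [Function.comp]
    rw [norm_inv]
    constructor
    · intro h
      exact (one_lt_inv₀ (lt_of_le_of_ne (norm_nonneg _) (Ne.symm habs))).mpr h
    · intro h
      exact (one_lt_inv₀ (lt_of_le_of_ne (norm_nonneg _) (Ne.symm habs))).mp h
  refine ⟨h1, ?_⟩
  -- total count
  have htot : P.roots.card = 2 * α := by
    rw [← hdeg]
    exact (Polynomial.splits_iff_card_roots.mp (IsAlgClosed.splits P)).symm ▸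
      (Polynomial.splits_iff_card_roots.mp (IsAlgClosed.splits P))
  have hsplit : (P.roots.filter (fun z => ‖z‖ < 1)).card
      + ((P.roots.filter (fun z => ‖z‖ = 1)).card
        + (P.roots.filter (fun z => 1 < ‖z‖)).card) = P.roots.card := by
    have e1 : P.roots.filter (fun z => ‖z‖ = 1)
        + P.roots.filter (fun z => 1 < ‖z‖)
        = P.roots.filter (fun z => ¬ ‖z‖ < 1) := by
      rw [Multiset.filter_add_filter]
      have e2 : P.roots.filter (fun z => ‖z‖ = 1 ∧ 1 < ‖z‖)
          = 0 := by
        rw [Multiset.filter_eq_nil]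
        rintro z _ ⟨h1', h2'⟩
        exact absurd h1' (ne_of_gt h2')
      rw [e2, add_zero]
      apply Multiset.filter_congr
      intro z _
      constructor
      · rintro (h | h) <;> [exact not_lt.mpr (le_of_eq h.symm); exact not_lt.mpr h.le]
      · intro h
        rcases eq_or_lt_of_le (not_lt.mp h) with h' | h'
        · exact Or.inl h'.symm
        · exact Or.inr h'
    calc (P.roots.filter (fun z => ‖z‖ < 1)).card
        + ((P.roots.filter (fun z => ‖z‖ = 1)).card
          + (P.roots.filter (fun z => 1 < ‖z‖)).card)
        = (P.roots.filter (fun z => ‖z‖ < 1)).card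
          + (P.roots.filter (fun z => ‖z‖ = 1)
            + P.roots.filter (fun z => 1 < ‖z‖)).card := by
          rw [Multiset.card_add]
      _ = (P.roots.filter (fun z => ‖z‖ < 1)
          + P.roots.filter (fun z => ¬ ‖z‖ < 1)).card := by
          rw [e1, Multiset.card_add]
      _ = P.roots.card := by rw [Multiset.filter_add_not]
  omega
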